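/- The alternating group A_5 admits an abelian partition and ϑ_a(A_5) = 21. -/
import Mathlib
open Equiv
abbrev sw5 (a b : Fin 5) : Equiv.Perm (Fin 5) := Equiv.swap a b
def L5 : List (Equiv.Perm (Fin 5)) := [
  1,
  sw5 2 3 * sw5 3 4,
  sw5 2 4 * sw5 4 3,
  sw5 1 2 * sw5 3 4,
  sw5 1 2 * sw5 2 3,
  sw5 1 2 * sw5 2 4,
  sw5 1 3 * sw5 3 2,
  sw5 1 3 * sw5 3 4,
  sw5 1 3 * sw5 2 4,
  sw5 1 4 * sw5 4 2,
  sw5 1 4 * sw5 4 3,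
  sw5 1 4 * sw5 2 3,
  sw5 0 1 * sw5 3 4,
  sw5 0 1 * sw5 2 3,
  sw5 0 1 * sw5 2 4,
  sw5 0 1 * sw5 1 2,
  sw5 0 1 * sw5 1 2 * sw5 2 3 * sw5 3 4,
  sw5 0 1 * sw5 1 2 * sw5 2 4 * sw5 4 3,
  sw5 0 1 * sw5 1 3 * sw5 3 4 * sw5 4 2,
  sw5 0 1 * sw5 1 3,
  sw5 0 1 * sw5 1 3 * sw5 3 2 * sw5 2 4,
  sw5 0 1 * sw5 1 4 * sw5 4 3 * sw5 3 2,
  sw5 0 1 * sw5 1 4,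
  sw5 0 1 * sw5 1 4 * sw5 4 2 * sw5 2 3,
  sw5 0 2 * sw5 2 1,
  sw5 0 2 * sw5 2 3 * sw5 3 4 * sw5 4 1,
  sw5 0 2 * sw5 2 4 * sw5 4 3 * sw5 3 1,
  sw5 0 2 * sw5 3 4,
  sw5 0 2 * sw5 2 3,
  sw5 0 2 * sw5 2 4,
  sw5 0 2 * sw5 1 3,
  sw5 0 2 * sw5 2 1 * sw5 1 3 * sw5 3 4,
  sw5 0 2 * sw5 2 4 * sw5 4 1 * sw5 1 3,
  sw5 0 2 * sw5 1 4,
  sw5 0 2 * sw5 2 1 * sw5 1 4 * sw5 4 3,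
  sw5 0 2 * sw5 2 3 * sw5 3 1 * sw5 1 4,
  sw5 0 3 * sw5 3 4 * sw5 4 2 * sw5 2 1,
  sw5 0 3 * sw5 3 1,
  sw5 0 3 * sw5 3 2 * sw5 2 4 * sw5 4 1,
  sw5 0 3 * sw5 3 2,
  sw5 0 3 * sw5 3 4,
  sw5 0 3 * sw5 2 4,
  sw5 0 3 * sw5 3 4 * sw5 4 1 * sw5 1 2,
  sw5 0 3 * sw5 1 2,
  sw5 0 3 * sw5 3 1 * sw5 1 2 * sw5 2 4,
  sw5 0 3 * sw5 3 1 * sw5 1 4 * sw5 4 2,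
  sw5 0 3 * sw5 3 2 * sw5 2 1 * sw5 1 4,
  sw5 0 3 * sw5 1 4,
  sw5 0 4 * sw5 4 3 * sw5 3 2 * sw5 2 1,
  sw5 0 4 * sw5 4 1,
  sw5 0 4 * sw5 4 2 * sw5 2 3 * sw5 3 1,
  sw5 0 4 * sw5 4 2,
  sw5 0 4 * sw5 4 3,
  sw5 0 4 * sw5 2 3,
  sw5 0 4 * sw5 4 3 * sw5 3 1 * sw5 1 2,
  sw5 0 4 * sw5 1 2,
  sw5 0 4 * sw5 4 1 * sw5 1 2 * sw5 2 3,
  sw5 0 4 * sw5 4 1 * sw5 1 3 * sw5 3 2,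
  sw5 0 4 * sw5 4 2 * sw5 2 1 * sw5 1 3,
  sw5 0 4 * sw5 1 3]

def R5 : List (Equiv.Perm (Fin 5)) := [
  sw5 0 1 * sw5 2 3,
  sw5 0 1 * sw5 2 4,
  sw5 0 1 * sw5 3 4,
  sw5 0 2 * sw5 3 4,
  sw5 1 2 * sw5 3 4,
  sw5 0 1 * sw5 1 2,
  sw5 0 1 * sw5 1 3,
  sw5 0 1 * sw5 1 4,
  sw5 0 2 * sw5 2 3,
  sw5 0 2 * sw5 2 4,
  sw5 0 3 * sw5 3 4,
  sw5 1 2 * sw5 2 3,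
  sw5 1 2 * sw5 2 4,
  sw5 1 3 * sw5 3 4,
  sw5 2 3 * sw5 3 4,
  sw5 0 1 * sw5 1 2 * sw5 2 3 * sw5 3 4,
  sw5 0 1 * sw5 1 2 * sw5 2 4 * sw5 4 3,
  sw5 0 1 * sw5 1 3 * sw5 3 4 * sw5 4 2,
  sw5 0 1 * sw5 1 3 * sw5 3 2 * sw5 2 4,
  sw5 0 1 * sw5 1 4 * sw5 4 3 * sw5 3 2,
  sw5 0 1 * sw5 1 4 * sw5 4 2 * sw5 2 3]

def f5 (x : Perm (Fin 5)) : Fin 21 :=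
  if x = 1 then 0 else ⟨(R5.findIdx fun r => decide (x * r = r * x)) % 21, Nat.mod_lt _ (by norm_num)⟩

def w5 (x : Perm (Fin 5)) : ℕ :=
  if x = 1 then 0 else if x * x = 1 then 4 else if x * (x * x) = 1 then 6 else 3

/-- An abelian partition of a group `G`: a family of `n` pairwise disjoint sets covering `G`,
each of size at least 2 and consisting of pairwise commuting elements. -/
def IsAbelianPartition {G : Type*} [Group G] {n : ℕ} (A : Fin n → Set G) : Prop :=
  (∀ i, 2 ≤ (A i).ncard) ∧ (⋃ i, A i) = Set.univ ∧
    Pairwise (Function.onFun Disjoint A) ∧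
    ∀ i, ∀ x ∈ A i, ∀ y ∈ A i, x * y = y * x

/-- The minimal number of parts in an abelian partition of `G` (0 if none exists). -/
noncomputable def apDegree (G : Type*) [Group G] : ℕ :=
  sInf {n | ∃ A : Fin n → Set G, IsAbelianPartition A}

/-- The maximal size of a noncommuting subset of `G`. -/
noncomputable def maxNoncommuting (G : Type*) [Group G] : ℕ :=
  sSup {k | ∃ S : Set G, S.ncard = k ∧ ∀ x ∈ S, ∀ y ∈ S, x ≠ y → x * y ≠ y * x}

set_option maxRecDepth 1000000 in
theorem hmem : ∀ x : Perm (Fin 5), Perm.sign x = 1 ↔ x ∈ L5 := by decide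

set_option maxRecDepth 1000000 in
theorem htot : (L5.map w5).sum = 252 := by decide

set_option maxRecDepth 1000000 in
theorem hnodup : L5.Nodup := by decide

set_option maxRecDepth 1000000 in
theorem hsurj : ∀ i : Fin 21, ∃ x, x ∈ L5 ∧ f5 x = i := by decide

set_option maxRecDepth 1000000 in
theorem hpair : ∀ x ∈ L5, ∃ y, y ∈ L5 ∧ y ≠ x ∧ f5 y = f5 x := by decide

set_option maxRecDepth 1000000 in
set_option maxHeartbeats 4000000 in
theorem hcent : ∀ x ∈ L5, x ≠ 1 →
    ((L5.filter (fun y => decide (x * y = y * x))).map w5).sum = 12 := by decide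

set_option maxRecDepth 1000000 in
set_option maxHeartbeats 4000000 in
theorem hcomm : ∀ x ∈ L5, ∀ y ∈ L5, f5 x = f5 y → x * y = y * x := by decide

abbrev G5 := alternatingGroup (Fin 5)

theorem memL (x : G5) : (x : Perm (Fin 5)) ∈ L5 :=
  (hmem x).1 (Equiv.Perm.mem_alternatingGroup.1 x.2)

def e5 : G5 ↪ Perm (Fin 5) := ⟨Subtype.val, Subtype.val_injective⟩

theorem map_univ : (Finset.univ : Finset G5).map e5 = L5.toFinset := by
  ext x
  simp only [Finset.mem_map, Finset.mem_univ, true_and, List.mem_toFinset]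
  constructor
  · rintro ⟨g, rfl⟩; exact memL g
  · intro hx
    exact ⟨⟨x, Equiv.Perm.mem_alternatingGroup.2 ((hmem x).2 hx)⟩, rfl⟩

theorem sum_w_univ : ∑ x : G5, w5 (x : Perm (Fin 5)) = 252 := by
  have h := Finset.sum_map (Finset.univ : Finset G5) e5 w5
  rw [map_univ, List.sum_toFinset w5 hnodup, htot] at h
  exact h.symm

theorem sum_w_centralizer (x : G5) (hx : x ≠ 1) :
    ∑ y ∈ Finset.univ.filter
      (fun y : G5 => (x : Perm (Fin 5)) * (y : Perm (Fin 5)) = (y : Perm (Fin 5)) * (x : Perm (Fin 5))),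
      w5 (y : Perm (Fin 5)) = 12 := by
  classical
  have hx' : (x : Perm (Fin 5)) ≠ 1 := fun h => hx (Subtype.ext h)
  have key := hcent x (memL x) hx'
  have hmap : (Finset.univ.filter
      (fun y : G5 => (x : Perm (Fin 5)) * (y : Perm (Fin 5)) = (y : Perm (Fin 5)) * (x : Perm (Fin 5)))).map e5
      = (L5.filter (fun y => decide ((x : Perm (Fin 5)) * y = y * (x : Perm (Fin 5))))).toFinset := by
    ext z
    simp only [Finset.mem_map, Finset.mem_filter, Finset.mem_univ, true_and,
      List.mem_toFinset, List.mem_filter, decide_eq_true_eq]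
    constructor
    · rintro ⟨g, hg, rfl⟩; exact ⟨memL g, hg⟩
    · rintro ⟨hz, hc⟩
      exact ⟨⟨z, Equiv.Perm.mem_alternatingGroup.2 ((hmem z).2 hz)⟩, hc, rfl⟩
  have h := Finset.sum_map (Finset.univ.filter
      (fun y : G5 => (x : Perm (Fin 5)) * (y : Perm (Fin 5)) = (y : Perm (Fin 5)) * (x : Perm (Fin 5)))) e5 w5
  rw [hmap, List.sum_toFinset w5 (hnodup.filter _), key] at h
  exact h.symm

/-- The explicit abelian partition of A₅ into 21 parts. -/
def P5 : Fin 21 → Set G5 := fun i => {x | f5 (x : Perm (Fin 5)) = i}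

theorem P5_partition : IsAbelianPartition P5 := by
  refine ⟨?_, ?_, ?_, ?_⟩
  · intro i
    obtain ⟨x, hxL, hfx⟩ := hsurj i
    obtain ⟨y, hyL, hyx, hfy⟩ := hpair x hxL
    have hxG : x ∈ alternatingGroup (Fin 5) := Equiv.Perm.mem_alternatingGroup.2 ((hmem x).2 hxL)
    have hyG : y ∈ alternatingGroup (Fin 5) := Equiv.Perm.mem_alternatingGroup.2 ((hmem y).2 hyL)
    exact (Set.one_lt_ncard_iff (Set.toFinite _)).2
      ⟨⟨x, hxG⟩, ⟨y, hyG⟩, hfx, hfy.trans hfx,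
        fun h => hyx (congrArg Subtype.val h.symm)⟩
  · ext x
    simp only [Set.mem_iUnion, Set.mem_univ, iff_true]
    exact ⟨f5 (x : Perm (Fin 5)), rfl⟩
  · intro i j hij
    simp only [Function.onFun, Set.disjoint_left]
    intro x hxi hxj
    exact hij (hxi.symm.trans hxj)
  · intro i x hx y hy
    exact Subtype.ext (hcomm x (memL x) y (memL y) (hx.trans hy.symm))

theorem lower_bound (n : ℕ) (A : Fin n → Set G5) (hA : IsAbelianPartition A) : 21 ≤ n := by
  classical
  obtain ⟨hcard, hcover, hdisj, hcm⟩ := hA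
  set T : Fin n → Finset G5 := fun i => (A i).toFinite.toFinset with hT
  have hpart : ∀ i, ∑ y ∈ T i, w5 (y : Perm (Fin 5)) ≤ 12 := by
    intro i
    obtain ⟨a, b, ha, hb, hab⟩ := (Set.one_lt_ncard_iff (Set.toFinite _)).1 (hcard i)
    have hex : ∃ x ∈ A i, x ≠ 1 := by
      rcases eq_or_ne a 1 with h1 | h1
      · exact ⟨b, hb, fun hb1 => hab (by rw [h1, hb1])⟩
      · exact ⟨a, ha, h1⟩
    obtain ⟨x, hx, hx1⟩ := hex
    have hsub : T i ⊆ Finset.univ.filter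
        (fun y : G5 => (x : Perm (Fin 5)) * (y : Perm (Fin 5)) = (y : Perm (Fin 5)) * (x : Perm (Fin 5))) := by
      intro y hy
      rw [Finset.mem_filter]
      exact ⟨Finset.mem_univ _,
        congrArg Subtype.val (hcm i x hx y ((Set.Finite.mem_toFinset _).1 hy))⟩
    calc ∑ y ∈ T i, w5 (y : Perm (Fin 5))
        ≤ ∑ y ∈ Finset.univ.filter
            (fun y : G5 => (x : Perm (Fin 5)) * (y : Perm (Fin 5)) = (y : Perm (Fin 5)) * (x : Perm (Fin 5))),
            w5 (y : Perm (Fin 5)) := Finset.sum_le_sum_of_subset hsub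
      _ = 12 := sum_w_centralizer x hx1
  have hbiUnion : Finset.univ.biUnion T = (Finset.univ : Finset G5) := by
    ext x
    simp only [Finset.mem_biUnion, Finset.mem_univ, true_and, iff_true,
      Set.Finite.mem_toFinset, hT]
    have hx : x ∈ ⋃ i, A i := by rw [hcover]; trivial
    exact Set.mem_iUnion.1 hx
  have hdisjT : Set.PairwiseDisjoint (↑(Finset.univ : Finset (Fin n))) T := by
    intro i _ j _ hij
    rw [Function.onFun, Finset.disjoint_left]
    intro x hxi hxj
    exact Set.disjoint_left.1 (hdisj hij) ((Set.Finite.mem_toFinset _).1 hxi)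
      ((Set.Finite.mem_toFinset _).1 hxj)
  have hmain : (252 : ℕ) ≤ 12 * n := by
    calc (252 : ℕ) = ∑ x : G5, w5 (x : Perm (Fin 5)) := sum_w_univ.symm
      _ = ∑ x ∈ Finset.univ.biUnion T, w5 (x : Perm (Fin 5)) := by rw [hbiUnion]
      _ = ∑ i : Fin n, ∑ y ∈ T i, w5 (y : Perm (Fin 5)) := Finset.sum_biUnion hdisjT
      _ ≤ ∑ _i : Fin n, 12 := Finset.sum_le_sum (fun i _ => hpart i)
      _ = 12 * n := by simp [Finset.sum_const, mul_comm]
  omega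

theorem apDegree_alternatingGroup_five :
    (∃ (n : ℕ) (A : Fin n → Set (alternatingGroup (Fin 5))), IsAbelianPartition A) ∧
      apDegree (alternatingGroup (Fin 5)) = 21 := by
  refine ⟨⟨21, P5, P5_partition⟩, ?_⟩
  apply le_antisymm
  · exact Nat.sInf_le ⟨P5, P5_partition⟩
  · exact le_csInf ⟨21, P5, P5_partition⟩
      (fun n hn => by obtain ⟨A, hA⟩ := hn; exact lower_bound n A hA)
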